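/- arXiv:1604.04593 — 3 statements merged into one kernel-verified Lean document; each statement's English description precedes it below -/
import Mathlib

section
/- If f : ℝ^n → ℝ^n is additive 1-homogeneous and monotone, and v ∈ ℝ^n and μ ∈ ℝ satisfy f(v) = μ·1 + v, then for every x ∈ ℝ^n the asymptotic average growth rate lim_{k→∞} f^k(x)/k exists and equals μ·1. -/
open Filter Topology

theorem stmt_1 (n : ℕ) (f : (Fin n → ℝ) → (Fin n → ℝ))
    (hhom : ∀ (a : ℝ) (x : Fin n → ℝ), f (fun i => a + x i) = fun i => a + f x i)
    (hmono : Monotone f)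
    (μ : ℝ) (v : Fin n → ℝ) (heig : f v = fun i => μ + v i) :
    ∀ (x : Fin n → ℝ) (i : Fin n),
      Tendsto (fun k : ℕ => (f^[k] x i) / (k : ℝ)) atTop (𝓝 μ) := by
  -- iterates commute with adding constants
  have hiter : ∀ (k : ℕ) (a : ℝ) (x : Fin n → ℝ),
      f^[k] (fun i => a + x i) = fun i => a + f^[k] x i := by
    intro k
    induction k with
    | zero => intro a x; simp
    | succ k ih =>
      intro a x
      rw [Function.iterate_succ_apply', Function.iterate_succ_apply', ih, hhom]
  -- iterates of v
  have hv : ∀ k : ℕ, f^[k] v = fun i => (k : ℝ) * μ + v i := by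
    intro k
    induction k with
    | zero => simp
    | succ k ih =>
      rw [Function.iterate_succ_apply, heig, hiter, ih]
      funext j
      push_cast
      ring
  intro x i
  haveI : Nonempty (Fin n) := ⟨i⟩
  set c : ℝ := Finset.univ.sup' Finset.univ_nonempty (fun j => |x j - v j|) with hcdef
  have hc : ∀ j, |x j - v j| ≤ c := fun j => Finset.le_sup' (f := fun j => |x j - v j|) (Finset.mem_univ j)
  have hxu : x ≤ fun j => c + v j := by
    intro j
    have := (abs_le.mp (hc j)).2
    show x j ≤ c + v j
    linarith
  have hxl : (fun j => -c + v j) ≤ x := by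
    intro j
    have := (abs_le.mp (hc j)).1
    show -c + v j ≤ x j
    linarith
  have key : ∀ k : ℕ, |f^[k] x i - ((k : ℝ) * μ + v i)| ≤ c := by
    intro k
    have h1 : f^[k] x i ≤ c + ((k : ℝ) * μ + v i) := by
      have := (hmono.iterate k) hxu i
      rw [hiter k c v, hv k] at this
      simpa using this
    have h2 : -c + ((k : ℝ) * μ + v i) ≤ f^[k] x i := by
      have := (hmono.iterate k) hxl i
      rw [hiter k (-c) v, hv k] at this
      simpa using this
    rw [abs_le]
    constructor <;> linarith
  rw [show (𝓝 μ) = 𝓝 (0 + μ) by ring_nf]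
  have h0 : Tendsto (fun k : ℕ => (f^[k] x i) / (k : ℝ) - μ) atTop (𝓝 0) := by
    refine squeeze_zero_norm' ?_ (tendsto_const_div_atTop_nhds_zero_nat (c + |v i|))
    · filter_upwards [eventually_ge_atTop 1] with k hk
      have hkpos : (0 : ℝ) < k := by exact_mod_cast hk
      have : (f^[k] x i) / (k : ℝ) - μ = (f^[k] x i - (k : ℝ) * μ) / k := by
        field_simp
      rw [Real.norm_eq_abs, this, abs_div, abs_of_pos hkpos, div_le_div_iff_of_pos_right hkpos]
      calc |f^[k] x i - (k : ℝ) * μ|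
          ≤ |f^[k] x i - ((k : ℝ) * μ + v i)| + |v i| := by
            have := abs_sub_abs_le_abs_sub (f^[k] x i - (k : ℝ) * μ) (v i)
            have h := abs_add_le (f^[k] x i - ((k : ℝ) * μ + v i)) (v i)
            have : f^[k] x i - (k : ℝ) * μ = (f^[k] x i - ((k : ℝ) * μ + v i)) + v i := by ring
            rw [this]; exact abs_add_le _ _
        _ ≤ c + |v i| := by linarith [key k]
  have := h0.add_const μ
  simpa using this
end

section
/- If f : ℝ^n → ℝ^n is additive 1-homogeneous and monotone with eigenpairs (μ₁, v₁) and (μ₂, v₂), i.e. f(v₁) = μ₁·1 + v₁ and f(v₂) = μ₂·1 + v₂, then μ₁ = μ₂. -/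
lemma stmt_2_aux (n : ℕ) (f : (Fin n → ℝ) → (Fin n → ℝ))
    (hhom : ∀ (a : ℝ) (x : Fin n → ℝ), f (fun i => a + x i) = fun i => a + f x i)
    (hmono : Monotone f)
    (μ₁ μ₂ : ℝ) (v₁ v₂ : Fin n → ℝ) (hn : 0 < n)
    (h₁ : f v₁ = fun i => μ₁ + v₁ i)
    (h₂ : f v₂ = fun i => μ₂ + v₂ i) :
    μ₁ ≤ μ₂ := by
  haveI : Nonempty (Fin n) := ⟨⟨0, hn⟩⟩
  obtain ⟨j, hj⟩ := Finite.exists_max (fun i => v₁ i - v₂ i)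
  set a := v₁ j - v₂ j with ha
  have hle : v₁ ≤ fun i => a + v₂ i := by
    intro i
    have := hj i
    simp only at this ⊢
    linarith
  have := hmono hle
  rw [hhom, h₁, h₂] at this
  have hjj := this j
  simp only at hjj
  linarith

theorem stmt_2 (n : ℕ) (f : (Fin n → ℝ) → (Fin n → ℝ))
    (hhom : ∀ (a : ℝ) (x : Fin n → ℝ), f (fun i => a + x i) = fun i => a + f x i)
    (hmono : Monotone f)
    (μ₁ μ₂ : ℝ) (v₁ v₂ : Fin n → ℝ) (hn : 0 < n)
    (h₁ : f v₁ = fun i => μ₁ + v₁ i)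
    (h₂ : f v₂ = fun i => μ₂ + v₂ i) :
    μ₁ = μ₂ := by
  exact le_antisymm
    (stmt_2_aux n f hhom hmono μ₁ μ₂ v₁ v₂ hn h₁ h₂)
    (stmt_2_aux n f hhom hmono μ₂ μ₁ v₂ v₁ hn h₂ h₁)
end

section
/- Let n ≥ 2 and b ∈ {0,1}^n with m = Σ_j b_j satisfying 0 < m < n. Consider the directed graph G on nodes {1,…,n} (indices mod n) with, for each j: a 'forward' arc from j−1 to j of weight t_j and duration b_j, and a 'backward' arc from j+1 to j of weight s_{j+1} and duration 1−b_{j+1}, where t_j, s_j ∈ ℝ. Then G is strongly connected, and the elementary cycles of G are exactly: the forward Hamiltonian cycle (weight Σ_j t_j, duration m), the backward Hamiltonian cycle (weight Σ_j s_j, duration n−m), and for each j the 2-cycle using the forward arc into j and the backward arc into j−1 (weight t_j + s_j, duration 1). Consequently the maximum cycle mean of G equals max( (Σ_j t_j)/m , max_j (t_j + s_j) , (Σ_j s_j)/(n−m) ). -/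
/-- An arc is a tuple (source, target, weight, duration). -/
abbrev TrainArc (n : ℕ) := Fin n × Fin n × ℝ × ℕ

/-- The arcs of the precedence graph of the max-plus train model on a ring of `n`
segments: for each `j`, a forward arc `j-1 → j` of weight `t j` and duration `b j`,
and a backward arc `j+1 → j` of weight `s (j+1)` and duration `1 - b (j+1)`. -/
def trainArcSet (n : ℕ) [NeZero n] (b : Fin n → ℕ) (t s : Fin n → ℝ) :
    Set (TrainArc n) :=
  {a | ∃ j : Fin n, a = (j - 1, j, t j, b j)} ∪
    {a | ∃ j : Fin n, a = (j + 1, j, s (j + 1), 1 - b (j + 1))}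

/-- A cycle: a nonempty list of arcs of the graph, consecutively chained, and closed. -/
def IsTrainCycle (n : ℕ) [NeZero n] (b : Fin n → ℕ) (t s : Fin n → ℝ)
    (l : List (TrainArc n)) : Prop :=
  l ≠ [] ∧ (∀ a ∈ l, a ∈ trainArcSet n b t s) ∧
    List.Chain' (fun a a' : TrainArc n => a.2.1 = a'.1) l ∧
    (l.getLast?.map fun a : TrainArc n => a.2.1) = (l.head?.map fun a : TrainArc n => a.1)

/-- Elementary: no vertex is visited twice (the sources of the arcs are pairwise distinct). -/
def IsElementary (n : ℕ) (l : List (TrainArc n)) : Prop :=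
  (l.map fun a : TrainArc n => a.1).Nodup

/-- Weight of a cycle. -/
def cycW (n : ℕ) (l : List (TrainArc n)) : ℝ := (l.map fun a : TrainArc n => a.2.2.1).sum

/-- Duration of a cycle. -/
def cycD (n : ℕ) (l : List (TrainArc n)) : ℕ := (l.map fun a : TrainArc n => a.2.2.2).sum




open Fin.NatCast Fin.CommRing

namespace Stmt12Aux

lemma one_ne_zero_fin {n : ℕ} [NeZero n] (hn : 2 ≤ n) : (1 : Fin n) ≠ 0 := by
  intro h1
  have h2 : n ∣ 1 := by rw [← Fin.natCast_eq_zero]; simpa using h1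
  have := Nat.dvd_one.mp h2; omega

lemma chain'_mem_imp {α : Type*} {P : α → Prop} {R R' : α → α → Prop}
    (h : ∀ a b, P a → R a b → R' a b) :
    ∀ {l : List α}, (∀ a ∈ l, P a) → List.Chain' R l → List.Chain' R' l
  | [], _, _ => List.isChain_nil
  | [a], _, _ => List.IsChain.singleton a
  | a :: b :: l, hp, hc => by
      simp only [List.Chain', List.isChain_cons_cons] at hc ⊢
      exact ⟨h a b (hp a (by simp)) hc.1,
        chain'_mem_imp h (fun x hx => hp x (by simp [hx])) hc.2⟩

lemma chain_getLast {n : ℕ} [NeZero n] (c : Fin n) :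
    ∀ (p : List (Fin n)) (v : Fin n), List.Chain (fun u w => w = u + c) v p →
      (v :: p).getLast (List.cons_ne_nil v p) = v + p.length • c
  | [], v, _ => by simp
  | w :: p, v, h => by
      simp only [List.Chain, List.isChain_cons_cons] at h
      have ih := chain_getLast c p w h.2
      rw [List.getLast_cons (List.cons_ne_nil w p), ih, h.1, List.length_cons, succ_nsmul]
      abel

lemma const_of_adj {α : Type*} (p : α → Prop) :
    ∀ (l : List α), (∀ (x y : α) (l1 l2 : List α), l = l1 ++ x :: y :: l2 → (p x ↔ p y)) →
      ∀ a ∈ l, ∀ b ∈ l, (p a ↔ p b)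
  | [], _, a, ha, _, _ => absurd ha (by simp)
  | c :: l', hadj, a, ha, b, hb => by
      have hl' : ∀ (x y : α) (l1 l2 : List α), l' = l1 ++ x :: y :: l2 → (p x ↔ p y) := by
        intro x y l1 l2 h
        exact hadj x y (c :: l1) l2 (by simp [h])
      have key : ∀ a ∈ l', (p c ↔ p a) := by
        intro a ha
        match l', ha, hl' with
        | d :: l'', ha, hl' =>
          have hcd : p c ↔ p d := hadj c d [] l'' rfl
          exact hcd.trans (const_of_adj p (d :: l'') hl' d (by simp) a ha)
      rcases List.mem_cons.mp ha with rfl | ha'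
      · rcases List.mem_cons.mp hb with rfl | hb'
        · exact Iff.rfl
        · exact key b hb'
      · rcases List.mem_cons.mp hb with rfl | hb'
        · exact (key a ha').symm
        · exact (key a ha').symm.trans (key b hb')

lemma lenLem {n : ℕ} [NeZero n] (l : List (TrainArc n)) (hne : l ≠ [])
    (hchain : List.Chain' (fun a a' : TrainArc n => a.2.1 = a'.1) l)
    (hclosed : (l.getLast?.map fun a : TrainArc n => a.2.1) =
      (l.head?.map fun a : TrainArc n => a.1))
    (helem : (l.map fun a : TrainArc n => a.1).Nodup)
    (c : Fin n) (hc : ∀ a ∈ l, a.2.1 = a.1 + c) :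
    l.length • c = 0 ∧ l.length ≤ n := by
  have hchain' : List.Chain' (fun a a' : TrainArc n => a'.1 = a.1 + c) l :=
    chain'_mem_imp (fun a a' hPa hR => hR ▸ hPa) hc hchain
  set p := l.map (fun a : TrainArc n => a.1) with hp
  have hpne : p ≠ [] := by simpa [hp] using hne
  have hpchain : List.Chain' (fun u w : Fin n => w = u + c) p :=
    (List.isChain_map _).mpr hchain'
  obtain ⟨v, p', hvp⟩ := List.exists_cons_of_ne_nil hpne
  have hch : List.Chain (fun u w : Fin n => w = u + c) v p' := by
    have := hpchain; rw [hvp] at this; exact this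
  have haL := List.getLast?_eq_getLast hne
  have haLmem : l.getLast hne ∈ l := List.getLast_mem hne
  have hsrcL : (l.getLast hne).1 = v + p'.length • c := by
    have h1 : p.getLast? = some (l.getLast hne).1 := by
      rw [hp, List.getLast?_map, haL]; rfl
    have h2 : p.getLast? = some (v + p'.length • c) := by
      rw [hvp, List.getLast?_eq_getLast (List.cons_ne_nil _ _), chain_getLast c p' v hch]
    rw [h1] at h2
    exact Option.some_injective _ h2
  have hheadv : l.head?.map (fun a : TrainArc n => a.1) = some v := by
    rw [← List.head?_map, ← hp, hvp]; rfl
  have hclose2 : (l.getLast hne).2.1 = v := by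
    have h3 := hclosed
    rw [haL, hheadv] at h3
    simpa using h3
  have hkey : v + p'.length • c + c = v := by
    rw [← hsrcL, ← hc _ haLmem]; exact hclose2
  have hzero : (p'.length + 1) • c = 0 := by
    have h4 : v + (p'.length • c + c) = v + 0 := by
      rw [add_zero, ← add_assoc]; exact hkey
    rw [succ_nsmul]; exact add_left_cancel h4
  have hlen : l.length = p'.length + 1 := by
    have h5 : p.length = p'.length + 1 := by rw [hvp]; rfl
    rwa [hp, List.length_map] at h5
  constructor
  · rw [hlen]; exact hzero
  · calc l.length = p.length := by rw [hp, List.length_map]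
      _ ≤ n := by simpa using helem.length_le_card

lemma sumLem {n : ℕ} [NeZero n] (g : Fin n → ℝ) (h : Fin n → ℕ) (l : List (TrainArc n))
    (hga : ∀ a ∈ l, a.2.2.1 = g a.1 ∧ a.2.2.2 = h a.1)
    (helem : (l.map fun a : TrainArc n => a.1).Nodup) (hlen : l.length = n) :
    (l.map fun a : TrainArc n => a.2.2.1).sum = ∑ u, g u ∧
      (l.map fun a : TrainArc n => a.2.2.2).sum = ∑ u, h u := by
  classical
  have huniv : (l.map fun a : TrainArc n => a.1).toFinset = Finset.univ := by
    apply Finset.eq_univ_of_card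
    rw [List.toFinset_card_of_nodup helem, List.length_map, hlen, Fintype.card_fin]
  constructor
  · have h1 : (l.map fun a : TrainArc n => a.2.2.1) = l.map (fun a => g a.1) :=
      List.map_congr_left (fun a ha => (hga a ha).1)
    have h2 : l.map (fun a : TrainArc n => g a.1)
        = (l.map fun a : TrainArc n => a.1).map g := by rw [List.map_map]; rfl
    rw [h1, h2, ← List.sum_toFinset _ helem, huniv]
  · have h1 : (l.map fun a : TrainArc n => a.2.2.2) = l.map (fun a => h a.1) :=
      List.map_congr_left (fun a ha => (hga a ha).2)
    have h2 : l.map (fun a : TrainArc n => h a.1)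
        = (l.map fun a : TrainArc n => a.1).map h := by rw [List.map_map]; rfl
    rw [h1, h2, ← List.sum_toFinset _ helem, huniv]

end Stmt12Aux

namespace Stmt12Aux

variable {n : ℕ} [NeZero n]

def trainArcSet' (n : ℕ) [NeZero n] (b : Fin n → ℕ) (t s : Fin n → ℝ) :
    Set (TrainArc n) :=
  {a | ∃ j : Fin n, a = (j - 1, j, t j, b j)} ∪
    {a | ∃ j : Fin n, a = (j + 1, j, s (j + 1), 1 - b (j + 1))}

variable (b : Fin n → ℕ) (t s : Fin n → ℝ)

lemma fwd_facts (a : TrainArc n) (h : ∃ j, a = (j - 1, j, t j, b j)) :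
    a.2.1 = a.1 + 1 ∧ a.2.2.1 = t (a.1 + 1) ∧ a.2.2.2 = b (a.1 + 1) := by
  obtain ⟨j, rfl⟩ := h
  refine ⟨?_, ?_, ?_⟩ <;> simp [sub_add_cancel]

lemma bwd_facts (a : TrainArc n) (h : ∃ j, a = (j + 1, j, s (j + 1), 1 - b (j + 1))) :
    a.2.1 = a.1 - 1 ∧ a.2.2.1 = s a.1 ∧ a.2.2.2 = 1 - b a.1 := by
  obtain ⟨j, rfl⟩ := h
  refine ⟨?_, ?_, ?_⟩ <;> simp [add_sub_cancel_right]

lemma shift_sum {M : Type*} [AddCommMonoid M] (f : Fin n → M) :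
    ∑ u : Fin n, f (u + 1) = ∑ j, f j :=
  Fintype.sum_equiv (Equiv.addRight 1) _ _ (fun _ => rfl)

lemma list_range_sum {M : Type*} [AddCommMonoid M] (f : Fin n → M) :
    ((List.range n).map (fun k : ℕ => f (k : Fin n))).sum = ∑ u : Fin n, f u := by
  have htf : (List.range n).toFinset = Finset.range n := by ext x; simp
  rw [← List.sum_toFinset _ List.nodup_range, htf,
    ← Fin.sum_univ_eq_sum_range (fun k : ℕ => f (k : Fin n)) n]
  exact Fintype.sum_congr _ _ (fun i => by rw [Fin.cast_val_eq_self])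

/-- The forward Hamiltonian cycle. -/
lemma fwd_real :
    ∃ l : List (TrainArc n), (l ≠ [] ∧ (∀ a ∈ l, a ∈ trainArcSet' n b t s) ∧
      List.Chain' (fun a a' : TrainArc n => a.2.1 = a'.1) l ∧
      (l.getLast?.map fun a : TrainArc n => a.2.1) = (l.head?.map fun a : TrainArc n => a.1)) ∧
      (l.map fun a : TrainArc n => a.1).Nodup ∧
      (l.map fun a : TrainArc n => a.2.2.1).sum = ∑ j, t j ∧
      (l.map fun a : TrainArc n => a.2.2.2).sum = ∑ j, b j := by
  classical
  have hn0 : 0 < n := Nat.pos_of_ne_zero (NeZero.ne n)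
  obtain ⟨N, hN⟩ := Nat.exists_eq_succ_of_ne_zero hn0.ne'
  set fF : ℕ → TrainArc n := fun k =>
    ((k : Fin n), (k : Fin n) + 1, t ((k : Fin n) + 1), b ((k : Fin n) + 1)) with hfF
  refine ⟨(List.range n).map fF, ⟨?_, ?_, ?_, ?_⟩, ?_, ?_, ?_⟩
  · simp [hn0.ne']
  · rintro a ha
    simp only [List.mem_map, List.mem_range] at ha
    obtain ⟨k, _, rfl⟩ := ha
    exact Or.inl ⟨(k : Fin n) + 1, by simp [hfF, add_sub_cancel_right]⟩
  · have hr : List.range n = List.range (N + 1) := by rw [hN]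
    simp only [List.Chain']
    rw [List.isChain_map, hr, List.isChain_range_succ]
    intro k hk
    simp only [hfF]
    push_cast
    ring_nf
  · have hr : List.range n = List.range (N + 1) := by rw [hN]
    have h3 : ((N : Fin n)) + 1 = 0 := by
      have h0 : ((N + 1 : ℕ) : Fin n) = 0 := by
        rw [← Nat.succ_eq_add_one, ← hN]; exact Fin.natCast_self n
      push_cast at h0; exact h0
    have h1 : ((List.range n).map fF).getLast? = some (fF N) := by
      rw [hr, List.range_succ, List.map_append]
      simp
    have h2 : ((List.range n).map fF).head? = some (fF 0) := by
      rw [hr, List.range_succ_eq_map]; rfl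
    rw [h1, h2]
    simp [hfF, h3]
  · rw [List.map_map]
    have : (fun a : TrainArc n => a.1) ∘ fF = fun k : ℕ => (k : Fin n) := rfl
    rw [this]
    exact List.Nodup.map_on
      (fun x hx y hy hxy => by
        rw [List.mem_range] at hx hy
        have := congrArg Fin.val hxy
        rwa [Fin.val_cast_of_lt hx, Fin.val_cast_of_lt hy] at this)
      List.nodup_range
  · rw [List.map_map]
    have h4 : (fun a : TrainArc n => a.2.2.1) ∘ fF
        = fun k : ℕ => (fun u : Fin n => t (u + 1)) (k : Fin n) := rfl
    rw [h4, list_range_sum (fun u : Fin n => t (u + 1)), shift_sum t]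
  · rw [List.map_map]
    have h4 : (fun a : TrainArc n => a.2.2.2) ∘ fF
        = fun k : ℕ => (fun u : Fin n => b (u + 1)) (k : Fin n) := rfl
    rw [h4, list_range_sum (fun u : Fin n => b (u + 1)), shift_sum b]

/-- The backward Hamiltonian cycle. -/
lemma bwd_real :
    ∃ l : List (TrainArc n), (l ≠ [] ∧ (∀ a ∈ l, a ∈ trainArcSet' n b t s) ∧
      List.Chain' (fun a a' : TrainArc n => a.2.1 = a'.1) l ∧
      (l.getLast?.map fun a : TrainArc n => a.2.1) = (l.head?.map fun a : TrainArc n => a.1)) ∧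
      (l.map fun a : TrainArc n => a.1).Nodup ∧
      (l.map fun a : TrainArc n => a.2.2.1).sum = ∑ j, s j ∧
      (l.map fun a : TrainArc n => a.2.2.2).sum = ∑ j, (1 - b j) := by
  classical
  have hn0 : 0 < n := Nat.pos_of_ne_zero (NeZero.ne n)
  obtain ⟨N, hN⟩ := Nat.exists_eq_succ_of_ne_zero hn0.ne'
  set fB : ℕ → TrainArc n := fun k =>
    (-(k : Fin n), -(k : Fin n) - 1, s (-(k : Fin n)), 1 - b (-(k : Fin n))) with hfB
  refine ⟨(List.range n).map fB, ⟨?_, ?_, ?_, ?_⟩, ?_, ?_, ?_⟩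
  · simp [hn0.ne']
  · rintro a ha
    simp only [List.mem_map, List.mem_range] at ha
    obtain ⟨k, _, rfl⟩ := ha
    exact Or.inr ⟨-(k : Fin n) - 1, by simp [hfB, sub_add_cancel]⟩
  · have hr : List.range n = List.range (N + 1) := by rw [hN]
    simp only [List.Chain']
    rw [List.isChain_map, hr, List.isChain_range_succ]
    intro k hk
    simp only [hfB]
    push_cast
    ring_nf
  · have hr : List.range n = List.range (N + 1) := by rw [hN]
    have h3 : ((N : Fin n)) + 1 = 0 := by
      have h0 : ((N + 1 : ℕ) : Fin n) = 0 := by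
        rw [← Nat.succ_eq_add_one, ← hN]; exact Fin.natCast_self n
      push_cast at h0; exact h0
    have h1 : ((List.range n).map fB).getLast? = some (fB N) := by
      rw [hr, List.range_succ, List.map_append]
      simp
    have h2 : ((List.range n).map fB).head? = some (fB 0) := by
      rw [hr, List.range_succ_eq_map]; rfl
    rw [h1, h2]
    simp only [Option.map_some, hfB, Nat.cast_zero, neg_zero]
    congr 1
    linear_combination -h3
  · rw [List.map_map]
    have h5 : (fun a : TrainArc n => a.1) ∘ fB = fun k : ℕ => -(k : Fin n) := rfl
    rw [h5]
    exact List.Nodup.map_on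
      (fun x hx y hy hxy => by
        rw [List.mem_range] at hx hy
        have h6 := neg_injective hxy
        have := congrArg Fin.val h6
        rwa [Fin.val_cast_of_lt hx, Fin.val_cast_of_lt hy] at this)
      List.nodup_range
  · rw [List.map_map]
    have h4 : (fun a : TrainArc n => a.2.2.1) ∘ fB
        = fun k : ℕ => (fun u : Fin n => s (-u)) (k : Fin n) := rfl
    rw [h4, list_range_sum (fun u : Fin n => s (-u))]
    exact Fintype.sum_equiv (Equiv.neg (Fin n)) _ _ (fun _ => rfl)
  · rw [List.map_map]
    have h4 : (fun a : TrainArc n => a.2.2.2) ∘ fB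
        = fun k : ℕ => (fun u : Fin n => 1 - b (-u)) (k : Fin n) := rfl
    rw [h4, list_range_sum (fun u : Fin n => 1 - b (-u))]
    exact Fintype.sum_equiv (Equiv.neg (Fin n)) _ _ (fun _ => rfl)

end Stmt12Aux

namespace Stmt12Aux

variable {n : ℕ} [NeZero n] {b : Fin n → ℕ} {t s : Fin n → ℝ}

lemma caseFwd (m : ℕ) (hm : m = ∑ j, b j)
    (l : List (TrainArc n)) (hne : l ≠ [])
    (hchain : List.Chain' (fun a a' : TrainArc n => a.2.1 = a'.1) l)
    (hclosed : (l.getLast?.map fun a : TrainArc n => a.2.1) =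
      (l.head?.map fun a : TrainArc n => a.1))
    (helem : (l.map fun a : TrainArc n => a.1).Nodup)
    (hf : ∀ a ∈ l, ∃ j, a = (j - 1, j, t j, b j)) :
    (l.map fun a : TrainArc n => a.2.2.1).sum = ∑ j, t j ∧
      (l.map fun a : TrainArc n => a.2.2.2).sum = m := by
  have hc : ∀ a ∈ l, a.2.1 = a.1 + 1 := fun a ha => (fwd_facts b t a (hf a ha)).1
  obtain ⟨hz, hle⟩ := lenLem l hne hchain hclosed helem 1 hc
  rw [nsmul_one] at hz
  have hdvd : n ∣ l.length := Fin.natCast_eq_zero.mp hz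
  have hlenpos : 0 < l.length := List.length_pos_iff.mpr hne
  have hlen : l.length = n := Nat.le_antisymm hle (Nat.le_of_dvd hlenpos hdvd)
  have hsum := sumLem (fun u => t (u + 1)) (fun u => b (u + 1)) l
    (fun a ha => ⟨(fwd_facts b t a (hf a ha)).2.1, (fwd_facts b t a (hf a ha)).2.2⟩) helem hlen
  exact ⟨hsum.1.trans (shift_sum t), hsum.2.trans ((shift_sum b).trans hm.symm)⟩

lemma caseBwd (m : ℕ) (hm : m = ∑ j, b j) (hb : ∀ j, b j ≤ 1)
    (l : List (TrainArc n)) (hne : l ≠ [])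
    (hchain : List.Chain' (fun a a' : TrainArc n => a.2.1 = a'.1) l)
    (hclosed : (l.getLast?.map fun a : TrainArc n => a.2.1) =
      (l.head?.map fun a : TrainArc n => a.1))
    (helem : (l.map fun a : TrainArc n => a.1).Nodup)
    (hg : ∀ a ∈ l, ∃ j, a = (j + 1, j, s (j + 1), 1 - b (j + 1))) :
    (l.map fun a : TrainArc n => a.2.2.1).sum = ∑ j, s j ∧
      (l.map fun a : TrainArc n => a.2.2.2).sum = n - m := by
  have hc : ∀ a ∈ l, a.2.1 = a.1 + (-1) := fun a ha => by
    rw [← sub_eq_add_neg]; exact (bwd_facts b s a (hg a ha)).1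
  obtain ⟨hz, hle⟩ := lenLem l hne hchain hclosed helem (-1) hc
  rw [smul_neg, nsmul_one, neg_eq_zero] at hz
  have hdvd : n ∣ l.length := Fin.natCast_eq_zero.mp hz
  have hlenpos : 0 < l.length := List.length_pos_iff.mpr hne
  have hlen : l.length = n := Nat.le_antisymm hle (Nat.le_of_dvd hlenpos hdvd)
  have hsum := sumLem s (fun u => 1 - b u) l
    (fun a ha => ⟨(bwd_facts b s a (hg a ha)).2.1, (bwd_facts b s a (hg a ha)).2.2⟩) helem hlen
  refine ⟨hsum.1, hsum.2.trans ?_⟩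
  have h1 : ∑ u : Fin n, (fun u => 1 - b u) u + ∑ u, b u = n := by
    rw [← Finset.sum_add_distrib]
    have h2 : ∀ u : Fin n, (1 - b u) + b u = 1 := fun u => by have := hb u; omega
    simp [h2]
  rw [← hm] at h1
  beta_reduce at h1
  omega

lemma classify (hn : 2 ≤ n) (m : ℕ) (hm : m = ∑ j, b j) (hb : ∀ j, b j ≤ 1)
    (l : List (TrainArc n)) (hne : l ≠ [])
    (hmem : ∀ a ∈ l, a ∈ trainArcSet' n b t s)
    (hchain : List.Chain' (fun a a' : TrainArc n => a.2.1 = a'.1) l)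
    (hclosed : (l.getLast?.map fun a : TrainArc n => a.2.1) =
      (l.head?.map fun a : TrainArc n => a.1))
    (helem : (l.map fun a : TrainArc n => a.1).Nodup) :
    ((l.map fun a : TrainArc n => a.2.2.1).sum = ∑ j, t j ∧
      (l.map fun a : TrainArc n => a.2.2.2).sum = m) ∨
    ((l.map fun a : TrainArc n => a.2.2.1).sum = ∑ j, s j ∧
      (l.map fun a : TrainArc n => a.2.2.2).sum = n - m) ∨
    (∃ j : Fin n, (l.map fun a : TrainArc n => a.2.2.1).sum = t j + s j ∧
      (l.map fun a : TrainArc n => a.2.2.2).sum = 1) := by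
  classical
  simp only [trainArcSet', Set.mem_union, Set.mem_setOf_eq] at hmem
  by_cases hf : ∀ a ∈ l, ∃ j, a = (j - 1, j, t j, b j)
  · exact Or.inl (caseFwd m hm l hne hchain hclosed helem hf)
  by_cases hg : ∀ a ∈ l, ∃ j, a = (j + 1, j, s (j + 1), 1 - b (j + 1))
  · exact Or.inr (Or.inl (caseBwd m hm hb l hne hchain hclosed helem hg))
  -- mixed case
  push_neg at hf hg
  obtain ⟨a0, ha0l, ha0⟩ := hf
  obtain ⟨a1, ha1l, ha1⟩ := hg
  have hFa1 : ∃ j, a1 = (j - 1, j, t j, b j) := by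
    rcases hmem a1 ha1l with h | h
    · exact h
    · exact absurd h (by simpa using ha1)
  have hnotadj : ¬ ∀ (x y : TrainArc n) (l1 l2 : List (TrainArc n)),
      l = l1 ++ x :: y :: l2 → ((∃ j, x = (j - 1, j, t j, b j)) ↔ (∃ j, y = (j - 1, j, t j, b j))) := by
    intro hadj
    have := const_of_adj (fun a : TrainArc n => ∃ j, a = (j - 1, j, t j, b j)) l hadj
      a1 ha1l a0 ha0l
    exact (by simpa using ha0 : ¬ ∃ j, a0 = (j - 1, j, t j, b j)) (this.mp hFa1)
  push_neg at hnotadj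
  obtain ⟨x, y, l1, l2, hsplit, hxy⟩ := hnotadj
  have hxl : x ∈ l := by rw [hsplit]; simp
  have hyl : y ∈ l := by rw [hsplit]; simp
  have hsuf : (x :: y :: l2) <:+ l := ⟨l1, hsplit.symm⟩
  have hRxy : x.2.1 = y.1 := (List.isChain_cons_cons.mp (List.IsChain.suffix hchain hsuf)).1
  -- the key step: if y's target is x's source, then l = [x, y]
  have pairLem : y.2.1 = x.1 → l = [x, y] := by
    intro hyx
    cases l2 with
    | cons z l2' =>
        exfalso
        have hsuf2 : (x :: y :: z :: l2') <:+ l := ⟨l1, hsplit.symm⟩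
        have hRyz : y.2.1 = z.1 :=
          (List.isChain_cons_cons.mp (List.isChain_cons_cons.mp (List.IsChain.suffix hchain hsuf2)).2).1
        have hzx : z.1 = x.1 := by rw [← hRyz, hyx]
        have hsub : ((x :: y :: z :: l2').map (fun a : TrainArc n => a.1)).Nodup :=
          List.Nodup.sublist (List.Sublist.map _ hsuf2.sublist) helem
        rw [List.map_cons, List.map_cons, List.map_cons, List.nodup_cons] at hsub
        exact hsub.1 (List.mem_cons.mpr (Or.inr (List.mem_cons.mpr (Or.inl hzx.symm))))
    | nil =>
    cases l1 with
    | nil => simpa using hsplit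
    | cons d l1' =>
        exfalso
        have hgl : l.getLast? = some y := by
          rw [hsplit, show (d :: l1') ++ [x, y] = ((d :: l1') ++ [x]) ++ [y] by simp,
            List.getLast?_concat]
        have hhd : l.head? = some d := by rw [hsplit]; rfl
        have hdx : d.1 = x.1 := by
          have h9 := hclosed
          rw [hgl, hhd] at h9
          simp only [Option.map_some, Option.some.injEq] at h9
          rw [← h9, hyx]
        have h8 : (l.map fun a : TrainArc n => a.1)
            = d.1 :: ((l1' ++ [x, y]).map (fun a : TrainArc n => a.1)) := by
          rw [hsplit]; simp
        rw [h8, List.nodup_cons] at helem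
        exact helem.1 (hdx ▸ List.mem_map_of_mem (f := fun a : TrainArc n => a.1) (by simp))
  rcases hxy with ⟨hFx, hnFy'⟩ | ⟨hnFx, hFy⟩
  · -- x forward, y backward
    have hnFy : ¬ ∃ j, y = (j - 1, j, t j, b j) := not_exists.mpr hnFy'
    have hBy : ∃ j, y = (j + 1, j, s (j + 1), 1 - b (j + 1)) := by
      rcases hmem y hyl with h | h
      · exact absurd h hnFy
      · exact h
    obtain ⟨j, hxj⟩ := hFx
    obtain ⟨j', hyj⟩ := hBy
    have hjj' : j = j' + 1 := by
      have h9 := hRxy; rw [hxj, hyj] at h9; simpa using h9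
    have hyx : y.2.1 = x.1 := by
      rw [hxj, hyj]
      show j' = j - 1
      rw [hjj', add_sub_cancel_right]
    have hleq := pairLem hyx
    refine Or.inr (Or.inr ⟨j, ?_, ?_⟩)
    · rw [hleq, hxj, hyj]
      simp [← hjj']
    · rw [hleq, hxj, hyj]
      simp only [List.map_cons, List.map_nil, List.sum_cons, List.sum_nil, ← hjj']
      have := hb j; omega
  · -- x backward, y forward
    have hBx : ∃ j, x = (j + 1, j, s (j + 1), 1 - b (j + 1)) := by
      rcases hmem x hxl with h | h
      · exact absurd h (not_exists.mpr hnFx)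
      · exact h
    obtain ⟨j', hxj⟩ := hBx
    obtain ⟨j, hyj⟩ := hFy
    have hjj' : j' = j - 1 := by
      have h9 := hRxy; rw [hxj, hyj] at h9; simpa using h9
    have hj : j' + 1 = j := by rw [hjj', sub_add_cancel]
    have hyx : y.2.1 = x.1 := by rw [hxj, hyj]; simp [hj]
    have hleq := pairLem hyx
    refine Or.inr (Or.inr ⟨j, ?_, ?_⟩)
    · rw [hleq, hxj, hyj]
      simp [hj, add_comm]
    · rw [hleq, hxj, hyj]
      simp only [List.map_cons, List.map_nil, List.sum_cons, List.sum_nil, hj]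
      have := hb j; omega

end Stmt12Aux

namespace Stmt12Aux

lemma two_real {n : ℕ} [NeZero n] (b : Fin n → ℕ) (t s : Fin n → ℝ)
    (hn : 2 ≤ n) (hb : ∀ j, b j ≤ 1) (j : Fin n) :
    ∃ l : List (TrainArc n), (l ≠ [] ∧ (∀ a ∈ l, a ∈ trainArcSet' n b t s) ∧
      List.Chain' (fun a a' : TrainArc n => a.2.1 = a'.1) l ∧
      (l.getLast?.map fun a : TrainArc n => a.2.1) = (l.head?.map fun a : TrainArc n => a.1)) ∧
      (l.map fun a : TrainArc n => a.1).Nodup ∧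
      (l.map fun a : TrainArc n => a.2.2.1).sum = t j + s j ∧
      (l.map fun a : TrainArc n => a.2.2.2).sum = 1 := by
  refine ⟨[(j - 1, j, t j, b j), (j, j - 1, s j, 1 - b j)], ⟨?_, ?_, ?_, ?_⟩, ?_, ?_, ?_⟩
  · simp
  · intro a ha
    simp only [List.mem_cons, List.not_mem_nil, or_false] at ha
    rcases ha with rfl | rfl
    · exact Or.inl ⟨j, rfl⟩
    · exact Or.inr ⟨j - 1, by simp [sub_add_cancel]⟩
  · exact List.Chain.cons rfl List.Chain.nil
  · rfl
  · have hne : j - 1 ≠ j :=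
      fun h => one_ne_zero_fin hn (left_eq_add.mp (sub_eq_iff_eq_add.mp h))
    simp [hne]
  · simp
  · simp only [List.map_cons, List.map_nil, List.sum_cons, List.sum_nil]
    have := hb j; omega

end Stmt12Aux

theorem stmt_12 (n : ℕ) [NeZero n] (hn : 2 ≤ n) (b : Fin n → ℕ)
    (hb : ∀ j, b j ≤ 1) (m : ℕ) (hm : m = ∑ j, b j)
    (hm0 : 0 < m) (hmn : m < n) (t s : Fin n → ℝ) :
    -- strong connectivity
    (∀ i j : Fin n,
      Relation.TransGen
        (fun i j : Fin n => ∃ a ∈ trainArcSet n b t s, a.1 = i ∧ a.2.1 = j) i j) ∧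
    -- every elementary cycle is one of the three kinds (by weight and duration)
    (∀ l : List (TrainArc n), IsTrainCycle n b t s l → IsElementary n l →
      (cycW n l = ∑ j, t j ∧ cycD n l = m) ∨
      (cycW n l = ∑ j, s j ∧ cycD n l = n - m) ∨
      (∃ j : Fin n, cycW n l = t j + s j ∧ cycD n l = 1)) ∧
    -- each of the three kinds is realized by an elementary cycle
    (∃ l, IsTrainCycle n b t s l ∧ IsElementary n l ∧
      cycW n l = ∑ j, t j ∧ cycD n l = m) ∧
    (∃ l, IsTrainCycle n b t s l ∧ IsElementary n l ∧
      cycW n l = ∑ j, s j ∧ cycD n l = n - m) ∧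
    (∀ j : Fin n, ∃ l, IsTrainCycle n b t s l ∧ IsElementary n l ∧
      cycW n l = t j + s j ∧ cycD n l = 1) ∧
    -- consequently, the maximum cycle mean is the announced maximum
    IsGreatest {x : ℝ | ∃ l, IsTrainCycle n b t s l ∧ IsElementary n l ∧
        x = cycW n l / (cycD n l : ℝ)}
      (max ((∑ j, t j) / (m : ℝ))
        (max (⨆ j, (t j + s j)) ((∑ j, s j) / ((n : ℝ) - (m : ℝ))))) := by
  classical
  have hn0 : 0 < n := lt_of_lt_of_le two_pos hn
  haveI : Nonempty (Fin n) := Fin.pos_iff_nonempty.mp hn0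
  have hAeq : trainArcSet n b t s = Stmt12Aux.trainArcSet' n b t s := rfl
  have hnm : ∑ j : Fin n, (1 - b j) = n - m := by
    have h1 : ∑ u : Fin n, (1 - b u) + ∑ u, b u = n := by
      rw [← Finset.sum_add_distrib]
      have h2 : ∀ u : Fin n, (1 - b u) + b u = 1 := fun u => by have := hb u; omega
      simp [h2]
    rw [← hm] at h1
    omega
  -- strong connectivity
  set r : Fin n → Fin n → Prop :=
    fun i j : Fin n => ∃ a ∈ trainArcSet n b t s, a.1 = i ∧ a.2.1 = j with hr
  have hstep : ∀ i : Fin n, r i (i + 1) := by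
    intro i
    refine ⟨(i + 1 - 1, i + 1, t (i + 1), b (i + 1)), Or.inl ⟨i + 1, rfl⟩, ?_, rfl⟩
    simp [add_sub_cancel_right]
  have hconn : ∀ i j : Fin n, Relation.TransGen r i j := by
    intro i j
    have hk : ∀ k : ℕ, Relation.TransGen r i (i + (k : Fin n) + 1) := by
      intro k
      induction k with
      | zero => simpa using Relation.TransGen.single (hstep i)
      | succ k ih =>
          have he : i + ((k + 1 : ℕ) : Fin n) + 1 = (i + (k : Fin n) + 1) + 1 := by
            push_cast; ring
          rw [he]
          exact ih.tail (hstep _)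
    have h2 : i + (((j - i - 1 : Fin n) : ℕ) : Fin n) + 1 = j := by
      rw [Fin.cast_val_eq_self]; abel
    rw [← h2]
    exact hk _
  -- classification
  have hclass : ∀ l : List (TrainArc n), IsTrainCycle n b t s l → IsElementary n l →
      (cycW n l = ∑ j, t j ∧ cycD n l = m) ∨
      (cycW n l = ∑ j, s j ∧ cycD n l = n - m) ∨
      (∃ j : Fin n, cycW n l = t j + s j ∧ cycD n l = 1) := by
    intro l hcyc helem
    obtain ⟨hne, hmem, hchain, hclosed⟩ := hcyc
    exact Stmt12Aux.classify hn m hm hb l hne (hAeq ▸ hmem) hchain hclosed helem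
  -- realizations
  have hrealF : ∃ l, IsTrainCycle n b t s l ∧ IsElementary n l ∧
      cycW n l = ∑ j, t j ∧ cycD n l = m := by
    obtain ⟨l, hbund, hnd, hW, hD⟩ := Stmt12Aux.fwd_real b t s
    exact ⟨l, hbund, hnd, hW, hD.trans hm.symm⟩
  have hrealB : ∃ l, IsTrainCycle n b t s l ∧ IsElementary n l ∧
      cycW n l = ∑ j, s j ∧ cycD n l = n - m := by
    obtain ⟨l, hbund, hnd, hW, hD⟩ := Stmt12Aux.bwd_real b t s
    exact ⟨l, hbund, hnd, hW, hD.trans hnm⟩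
  have hreal2 : ∀ j : Fin n, ∃ l, IsTrainCycle n b t s l ∧ IsElementary n l ∧
      cycW n l = t j + s j ∧ cycD n l = 1 := by
    intro j
    obtain ⟨l, hbund, hnd, hW, hD⟩ := Stmt12Aux.two_real b t s hn hb j
    exact ⟨l, hbund, hnd, hW, hD⟩
  refine ⟨hconn, hclass, hrealF, hrealB, hreal2, ?_, ?_⟩
  -- membership
  · have hTmem : (∑ j, t j) / (m : ℝ) ∈ {x : ℝ | ∃ l, IsTrainCycle n b t s l ∧
        IsElementary n l ∧ x = cycW n l / (cycD n l : ℝ)} := by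
      obtain ⟨l, h1, h2, hW, hD⟩ := hrealF
      exact ⟨l, h1, h2, by rw [hW, hD]⟩
    have hSmem : (∑ j, s j) / ((n : ℝ) - (m : ℝ)) ∈ {x : ℝ | ∃ l, IsTrainCycle n b t s l ∧
        IsElementary n l ∧ x = cycW n l / (cycD n l : ℝ)} := by
      obtain ⟨l, h1, h2, hW, hD⟩ := hrealB
      refine ⟨l, h1, h2, by rw [hW, hD, Nat.cast_sub hmn.le]⟩
    have h2mem : ∀ j : Fin n, t j + s j ∈ {x : ℝ | ∃ l, IsTrainCycle n b t s l ∧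
        IsElementary n l ∧ x = cycW n l / (cycD n l : ℝ)} := by
      intro j
      obtain ⟨l, h1, h2, hW, hD⟩ := hreal2 j
      exact ⟨l, h1, h2, by rw [hW, hD]; simp⟩
    obtain ⟨j0, hj0⟩ := exists_eq_ciSup_of_finite (f := fun j : Fin n => t j + s j)
    rcases max_choice ((∑ j, t j) / (m : ℝ))
        (max (⨆ j, (t j + s j)) ((∑ j, s j) / ((n : ℝ) - (m : ℝ)))) with hM | hM
    · rw [hM]; exact hTmem
    · rw [hM]
      rcases max_choice (⨆ j, (t j + s j)) ((∑ j, s j) / ((n : ℝ) - (m : ℝ))) with h2 | h2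
      · rw [h2, ← hj0]; exact h2mem j0
      · rw [h2]; exact hSmem
  -- upper bound
  · rintro x ⟨l, hcyc, helem, rfl⟩
    rcases hclass l hcyc helem with ⟨hW, hD⟩ | ⟨hW, hD⟩ | ⟨j, hW, hD⟩
    · rw [hW, hD]
      exact le_max_left _ _
    · rw [hW, hD, Nat.cast_sub hmn.le]
      exact le_trans (le_max_right _ _) (le_max_right _ _)
    · rw [hW, hD]
      simp only [Nat.cast_one, div_one]
      exact le_trans (le_ciSup (f := fun j : Fin n => t j + s j) (Finite.bddAbove_range _) j)
        (le_trans (le_max_left _ _) (le_max_right _ _))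
end
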